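/- Let n ≥ 1 and K ≥ 1, and let L : ℝⁿ → ℝ be a C² function whose Hessian satisfies |ξ|² ≤ ξ·D²L(z)ξ ≤ K|ξ|² for all z, ξ ∈ ℝⁿ. Let g : ℝⁿ → ℝ, let x₀, y₀ ∈ ℝⁿ, and let u : ℝⁿ → ℝ satisfy: (i) u(x) ≤ g(y) + L(x − y) for all x, y ∈ ℝⁿ; (ii) u(x₀) = g(y₀) + L(x₀ − y₀); (iii) g(y) + L(x₀ − y) > g(y₀) + L(x₀ − y₀) for all y ≠ y₀; and (iv) there exist C₀, ρ > 0 such that, with p₀ := ∇L(x₀ − y₀), one has |u(x) − u(x₀) − p₀·(x − x₀)| ≤ C₀|x − x₀|² whenever |x − x₀| ≤ ρ. Then there exist δ > 0 and r > 0 such that g(y) + L(x₀ − y) ≥ g(y₀) + L(x₀ − y₀) + δ|y − y₀|² for all y with |y − y₀| ≤ r. -/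

import Mathlib

set_option maxHeartbeats 1000000


open scoped RealInnerProductSpace
open MeasureTheory

/-- The Euclidean Laplacian: sum of second partial derivatives. -/
noncomputable def lap {n : ℕ} (f : EuclideanSpace ℝ (Fin n) → ℝ)
    (x : EuclideanSpace ℝ (Fin n)) : ℝ :=
  ∑ i : Fin n,
    fderiv ℝ (fun y => fderiv ℝ f y (EuclideanSpace.single i 1)) x (EuclideanSpace.single i 1)

/-- The divergence of a vector field: sum of partial derivatives of the components. -/
noncomputable def dvg {n : ℕ} (F : EuclideanSpace ℝ (Fin n) → EuclideanSpace ℝ (Fin n))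
    (x : EuclideanSpace ℝ (Fin n)) : ℝ :=
  ∑ i : Fin n, fderiv ℝ (fun y => F y i) x (EuclideanSpace.single i 1)

/-- A function on ℝⁿ is ℤⁿ-periodic if it is invariant under translation by
every integer vector. -/
def IsZnPeriodic {n : ℕ} {α : Type*} (f : EuclideanSpace ℝ (Fin n) → α) : Prop :=
  ∀ (x : EuclideanSpace ℝ (Fin n)) (k : Fin n → ℤ),
    f (x + ∑ i : Fin n, (k i : ℝ) • EuclideanSpace.single i (1 : ℝ)) = f x

/-- The unit cube [0,1]ⁿ in ℝⁿ. -/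
def unitCube (n : ℕ) : Set (EuclideanSpace ℝ (Fin n)) :=
  {x | ∀ i, x i ∈ Set.Icc (0 : ℝ) 1}

section aux

variable {n : ℕ}

private lemma inner_gradient_eq_fderiv (L : EuclideanSpace ℝ (Fin n) → ℝ)
    (z v : EuclideanSpace ℝ (Fin n)) : ⟪gradient L z, v⟫ = fderiv ℝ L z v := by
  have h := (InnerProductSpace.toDual ℝ (EuclideanSpace ℝ (Fin n))).apply_symm_apply (fderiv ℝ L z)
  calc ⟪gradient L z, v⟫
      = (InnerProductSpace.toDual ℝ (EuclideanSpace ℝ (Fin n))) (gradient L z) v := rfl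
    _ = fderiv ℝ L z v := by rw [gradient, h]

private lemma line_deriv1 (L : EuclideanSpace ℝ (Fin n) → ℝ) (hL : ContDiff ℝ 2 L)
    (b h : EuclideanSpace ℝ (Fin n)) (t : ℝ) :
    HasDerivAt (fun s : ℝ => L (b + s • h)) (fderiv ℝ L (b + t • h) h) t := by
  have hline : HasDerivAt (fun s : ℝ => b + s • h) h t := by
    simpa using ((hasDerivAt_id t).smul_const h).const_add b
  exact ((hL.differentiable (by norm_num) (b + t • h)).hasFDerivAt).comp_hasDerivAt t hline

private lemma line_deriv2 (L : EuclideanSpace ℝ (Fin n) → ℝ) (hL : ContDiff ℝ 2 L)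
    (b h : EuclideanSpace ℝ (Fin n)) (t : ℝ) :
    HasDerivAt (fun s : ℝ => fderiv ℝ L (b + s • h) h)
      (fderiv ℝ (fderiv ℝ L) (b + t • h) h h) t := by
  have hline : HasDerivAt (fun s : ℝ => b + s • h) h t := by
    simpa using ((hasDerivAt_id t).smul_const h).const_add b
  have hd : ContDiff ℝ 1 (fderiv ℝ L) := hL.fderiv_right (by norm_num)
  have h1 : HasDerivAt (fun s : ℝ => fderiv ℝ L (b + s • h))
      (fderiv ℝ (fderiv ℝ L) (b + t • h) h) t := by
    exact ((hd.differentiable (by norm_num) (b + t • h)).hasFDerivAt).comp_hasDerivAt t hline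
  simpa using h1.clm_apply (hasDerivAt_const t h)

/-- helper: a real function with everywhere derivative nonneg on [0,1] is monotone there -/
private lemma mono_of_hasDerivAt (f f' : ℝ → ℝ) (hf : ∀ s, HasDerivAt f (f' s) s)
    (h : ∀ s ∈ Set.Icc (0:ℝ) 1, 0 ≤ f' s) : MonotoneOn f (Set.Icc (0:ℝ) 1) := by
  apply monotoneOn_of_deriv_nonneg (convex_Icc 0 1)
  · have : Differentiable ℝ f := fun s => (hf s).differentiableAt
    exact this.continuous.continuousOn
  · intro s hs; exact (hf s).differentiableAt.differentiableWithinAt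
  · intro s hs
    rw [interior_Icc] at hs
    rw [(hf s).deriv]
    exact h s ⟨le_of_lt hs.1, le_of_lt hs.2⟩

/-- strong monotonicity of the gradient along a segment -/
private lemma grad_mono (K : ℝ) (L : EuclideanSpace ℝ (Fin n) → ℝ) (hL : ContDiff ℝ 2 L)
    (hHess : ∀ z ξ : EuclideanSpace ℝ (Fin n),
      ‖ξ‖^2 ≤ fderiv ℝ (fderiv ℝ L) z ξ ξ ∧ fderiv ℝ (fderiv ℝ L) z ξ ξ ≤ K * ‖ξ‖^2)
    (a b : EuclideanSpace ℝ (Fin n)) :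
    fderiv ℝ L b (a - b) + ‖a - b‖^2 ≤ fderiv ℝ L a (a - b) := by
  set h := a - b with hh
  have key : MonotoneOn (fun s : ℝ => fderiv ℝ L (b + s • h) h - ‖h‖^2 * s)
      (Set.Icc (0:ℝ) 1) := by
    apply mono_of_hasDerivAt _ (fun s => fderiv ℝ (fderiv ℝ L) (b + s • h) h h - ‖h‖^2)
    · intro s
      exact ((line_deriv2 L hL b h s).sub ((hasDerivAt_id s).const_mul (‖h‖^2))).congr_deriv (by simp)
    · intro s _
      have := (hHess (b + s • h) h).1
      linarith
  have h01 := key (Set.left_mem_Icc.2 zero_le_one) (Set.right_mem_Icc.2 zero_le_one) zero_le_one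
  simp only [zero_smul, add_zero, one_smul, mul_zero, mul_one] at h01
  have hba : b + h = a := by rw [hh]; abel
  rw [hba] at h01
  linarith

/-- second-order Taylor upper bound -/
private lemma taylor_upper (K : ℝ) (L : EuclideanSpace ℝ (Fin n) → ℝ) (hL : ContDiff ℝ 2 L)
    (hHess : ∀ z ξ : EuclideanSpace ℝ (Fin n),
      ‖ξ‖^2 ≤ fderiv ℝ (fderiv ℝ L) z ξ ξ ∧ fderiv ℝ (fderiv ℝ L) z ξ ξ ≤ K * ‖ξ‖^2)
    (b h : EuclideanSpace ℝ (Fin n)) :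
    L (b + h) ≤ L b + fderiv ℝ L b h + K / 2 * ‖h‖^2 := by
  -- step 1: fderiv bound along the segment
  have step1 : ∀ s ∈ Set.Icc (0:ℝ) 1,
      fderiv ℝ L (b + s • h) h ≤ fderiv ℝ L b h + K * ‖h‖^2 * s := by
    have key : MonotoneOn (fun s : ℝ => K * ‖h‖^2 * s - fderiv ℝ L (b + s • h) h)
        (Set.Icc (0:ℝ) 1) := by
      apply mono_of_hasDerivAt _
        (fun s => K * ‖h‖^2 - fderiv ℝ (fderiv ℝ L) (b + s • h) h h)
      · intro s
        exact (((hasDerivAt_id s).const_mul (K * ‖h‖^2)).sub (line_deriv2 L hL b h s)).congr_deriv (by simp)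
      · intro s _
        have := (hHess (b + s • h) h).2
        linarith
    intro s hs
    have h0s := key (Set.left_mem_Icc.2 zero_le_one) hs hs.1
    simp only [zero_smul, add_zero, mul_zero] at h0s
    linarith
  -- step 2: antitone auxiliary function
  have key2 : AntitoneOn
      (fun s : ℝ => L (b + s • h) - s * fderiv ℝ L b h - K / 2 * ‖h‖^2 * s^2)
      (Set.Icc (0:ℝ) 1) := by
    have hder : ∀ s : ℝ, HasDerivAt
        (fun s : ℝ => L (b + s • h) - s * fderiv ℝ L b h - K / 2 * ‖h‖^2 * s^2)
        (fderiv ℝ L (b + s • h) h - fderiv ℝ L b h - K / 2 * ‖h‖^2 * (2 * s)) s := by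
      intro s
      have h1 := (line_deriv1 L hL b h s).sub ((hasDerivAt_id s).mul_const (fderiv ℝ L b h))
      have h2 : HasDerivAt (fun s : ℝ => K / 2 * ‖h‖^2 * s^2) (K / 2 * ‖h‖^2 * (2 * s)) s := by
        simpa [mul_comm, mul_assoc, mul_left_comm] using
          ((hasDerivAt_pow 2 s).const_mul (K / 2 * ‖h‖^2))
      exact (h1.sub h2).congr_deriv (by simp)
    apply antitoneOn_of_deriv_nonpos (convex_Icc 0 1)
    · have : Differentiable ℝ (fun s : ℝ => L (b + s • h) - s * fderiv ℝ L b h - K / 2 * ‖h‖^2 * s^2) :=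
        fun s => (hder s).differentiableAt
      exact this.continuous.continuousOn
    · intro s hs; exact (hder s).differentiableAt.differentiableWithinAt
    · intro s hs
      rw [interior_Icc] at hs
      rw [(hder s).deriv]
      have := step1 s ⟨le_of_lt hs.1, le_of_lt hs.2⟩
      nlinarith [hs.1.le]
  have h10 := key2 (Set.left_mem_Icc.2 zero_le_one) (Set.right_mem_Icc.2 zero_le_one) zero_le_one
  simp only [zero_smul, add_zero, one_smul, mul_zero, mul_one, zero_mul, one_pow] at h10
  norm_num at h10
  linarith

end aux

/-- nondegeneracy lemma: if L is C² with I ≤ D²L ≤ K·I, u is the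
Hopf–Lax lower bound of the competitors g(y) + L(x−y) with a unique minimizer y₀
at x₀, and u admits a second-order expansion at x₀ with gradient ∇L(x₀ − y₀),
then y ↦ g(y) + L(x₀ − y) grows at least quadratically near y₀. -/
theorem hopf_lax_nondegeneracy (n : ℕ) (hn : 1 ≤ n) (K : ℝ) (hK : 1 ≤ K)
    (L : EuclideanSpace ℝ (Fin n) → ℝ) (hL : ContDiff ℝ 2 L)
    (hHess : ∀ z ξ : EuclideanSpace ℝ (Fin n),
      ‖ξ‖^2 ≤ fderiv ℝ (fderiv ℝ L) z ξ ξ ∧ fderiv ℝ (fderiv ℝ L) z ξ ξ ≤ K * ‖ξ‖^2)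
    (g u : EuclideanSpace ℝ (Fin n) → ℝ) (x₀ y₀ : EuclideanSpace ℝ (Fin n))
    (hub : ∀ x y, u x ≤ g y + L (x - y))
    (hattain : u x₀ = g y₀ + L (x₀ - y₀))
    (huniq : ∀ y, y ≠ y₀ → g y₀ + L (x₀ - y₀) < g y + L (x₀ - y))
    (C₀ ρ : ℝ) (hC₀ : 0 < C₀) (hρ : 0 < ρ)
    (htwice : ∀ x, ‖x - x₀‖ ≤ ρ →
      |u x - u x₀ - ⟪gradient L (x₀ - y₀), x - x₀⟫| ≤ C₀ * ‖x - x₀‖^2) :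
    ∃ δ > 0, ∃ r > 0, ∀ y, ‖y - y₀‖ ≤ r →
      g y + L (x₀ - y) ≥ g y₀ + L (x₀ - y₀) + δ * ‖y - y₀‖^2 := by
  set C : ℝ := C₀ + K / 2 with hCdef
  clear_value C
  have hC : 0 < C := by rw [hCdef]; positivity
  set t : ℝ := 1 / (2 * C) with htdef
  clear_value t
  have ht : 0 < t := by rw [htdef]; positivity
  refine ⟨t / 2, by positivity, ρ / t, by positivity, fun y hy => ?_⟩
  set d := y - y₀ with hd
  set h := t • d with hhd
  set x := x₀ + h with hx
  have hxx : x - x₀ = h := by rw [hx]; abel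
  have hnh : ‖h‖ = t * ‖d‖ := by
    rw [hhd, norm_smul, Real.norm_eq_abs, abs_of_pos ht]
  have hρh : ‖x - x₀‖ ≤ ρ := by
    rw [hxx, hnh]
    calc t * ‖d‖ ≤ t * (ρ / t) := by
          exact mul_le_mul_of_nonneg_left hy ht.le
      _ = ρ := by field_simp
  -- second order expansion lower bound
  have h1 := htwice x hρh
  rw [hxx, inner_gradient_eq_fderiv] at h1
  have h1' : u x₀ + fderiv ℝ L (x₀ - y₀) h - C₀ * ‖h‖^2 ≤ u x := by
    have := abs_le.1 h1
    linarith [this.1]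
  -- upper bound on u x
  have h2 : u x ≤ g y + L (x - y) := hub x y
  -- Taylor upper bound: x - y = (x₀ - y) + h
  have hxy : x - y = (x₀ - y) + h := by rw [hx]; abel
  have h3 : L (x - y) ≤ L (x₀ - y) + fderiv ℝ L (x₀ - y) h + K / 2 * ‖h‖^2 := by
    rw [hxy]; exact taylor_upper K L hL hHess (x₀ - y) h
  -- strong monotonicity: a = x₀ - y₀, b = x₀ - y, a - b = y - y₀ = d
  have hab : (x₀ - y₀) - (x₀ - y) = d := by rw [hd]; abel
  have h4 := grad_mono K L hL hHess (x₀ - y₀) (x₀ - y)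
  rw [hab] at h4
  -- linearity of fderiv in the direction
  have h5 : fderiv ℝ L (x₀ - y₀) h = t * fderiv ℝ L (x₀ - y₀) d := by
    rw [hhd, (fderiv ℝ L (x₀ - y₀)).map_smul]; simp
  have h6 : fderiv ℝ L (x₀ - y) h = t * fderiv ℝ L (x₀ - y) d := by
    rw [hhd, (fderiv ℝ L (x₀ - y)).map_smul]; simp
  -- combine
  have hCt : C * t = 1 / 2 := by rw [htdef]; field_simp
  have hnh2 : ‖h‖^2 = t^2 * ‖d‖^2 := by rw [hnh]; ring
  have h4t : t * fderiv ℝ L (x₀ - y) d + t * ‖d‖^2 ≤ t * fderiv ℝ L (x₀ - y₀) d := by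
    have := mul_le_mul_of_nonneg_left h4 ht.le
    linarith [this, (mul_add t (fderiv ℝ L (x₀ - y) d) (‖d‖^2)).symm.le]
  have hCh : C₀ * ‖h‖^2 + K / 2 * ‖h‖^2 = C * t^2 * ‖d‖^2 := by
    rw [hnh2, hCdef]; ring
  have hfinal : C * t^2 * ‖d‖^2 = t / 2 * ‖d‖^2 := by
    have e : C * t^2 = (C * t) * t := by ring
    rw [e, hCt]; ring
  have key : g y + L (x₀ - y) ≥ g y₀ + L (x₀ - y₀) + t * ‖d‖^2 - C * t^2 * ‖d‖^2 := by
    linarith [h1', h2, h3, h4t, h5, h6, hCh, hattain]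
  linarith [key, hfinal]
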